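/- Let n = (n_1,…,n_m) be a tuple of nonnegative integers with N = n_1+⋯+n_m and, for a real number q, let K(n|q) = Σ_M q^{cr(M)}, the sum over all inhomogeneous perfect matchings M of [N] with respect to the boxes determined by n, where cr(M) is the number of crossings of M. Then for all j ≠ k in {1,…,m} and all real q: K_j^+(n|q) − K_k^+(n|q) = [n_k]_q K_k^-(n|q) − [n_j]_q K_j^-(n|q), where [n]_q = 1 + q + ⋯ + q^{n-1} and a term [n_j]_q K_j^-(n|q) is interpreted as 0 when n_j = 0. -/

import Mathlib

open Finset MeasureTheory
open scoped Classical

namespace Paper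

/-- Sum of sizes of boxes before box `j`. -/
def psum {m : ℕ} (n : Fin m → ℕ) (j : Fin m) : ℕ :=
  ∑ t : Fin m, if t < j then n t else 0

/-- `i` (0-indexed) lies in box `j`. -/
def inBox {m : ℕ} (n : Fin m → ℕ) (j : Fin m) (i : ℕ) : Prop :=
  psum n j ≤ i ∧ i < psum n j + n j

/-- `i` and `k` lie in a common box. -/
def sameBox {m : ℕ} (n : Fin m → ℕ) (i k : ℕ) : Prop :=
  ∃ j : Fin m, inBox n j i ∧ inBox n j k

/-- Total number of elements. -/
def total {m : ℕ} (n : Fin m → ℕ) : ℕ := ∑ t, n t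

/-- `P` is a set partition of `{0, …, N-1}`. -/
def IsPartitionOf (N : ℕ) (P : Finset (Finset ℕ)) : Prop :=
  (∀ b ∈ P, b ⊆ Finset.range N ∧ b.Nonempty) ∧
  ∀ i ∈ Finset.range N, (P.filter fun b => i ∈ b).card = 1

/-- No block of `P` contains two distinct elements of the same box. -/
def InhomBlocks {m : ℕ} (n : Fin m → ℕ) (P : Finset (Finset ℕ)) : Prop :=
  ∀ b ∈ P, ∀ i ∈ b, ∀ k ∈ b, i ≠ k → ¬ sameBox n i k

/-- The inhomogeneous perfect matchings of `[N]` w.r.t. the boxes of `n`. -/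
noncomputable def matchings {m : ℕ} (n : Fin m → ℕ) : Finset (Finset (Finset ℕ)) :=
  ((Finset.range (total n)).powerset.powerset).filter
    (fun P => IsPartitionOf (total n) P ∧ (∀ b ∈ P, b.card = 2) ∧ InhomBlocks n P)

/-- Number of inhomogeneous perfect matchings. -/
noncomputable def K {m : ℕ} (n : Fin m → ℕ) : ℕ := (matchings n).card


/-- `(i,j)` is an arc of the partition `P`: `i < j` lie in a common block with
no block element strictly between them. -/
def IsArc (P : Finset (Finset ℕ)) (i j : ℕ) : Prop :=
  i < j ∧ ∃ b ∈ P, i ∈ b ∧ j ∈ b ∧ ∀ t ∈ b, ¬ (i < t ∧ t < j)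

/-- Number of crossings of a set partition of `[N]`: pairs of arcs `(i,j)`, `(k,l)`
with `i < k < j < l`. -/
noncomputable def crossNum (N : ℕ) (P : Finset (Finset ℕ)) : ℕ :=
  (((Finset.range N ×ˢ Finset.range N) ×ˢ (Finset.range N ×ˢ Finset.range N)).filter
    (fun q => IsArc P q.1.1 q.1.2 ∧ IsArc P q.2.1 q.2.2 ∧
      q.1.1 < q.2.1 ∧ q.2.1 < q.1.2 ∧ q.1.2 < q.2.2)).card

/-- `[n]_q = 1 + q + ⋯ + q^{n-1}`. -/
def qInt (q : ℝ) (n : ℕ) : ℝ := ∑ t ∈ Finset.range n, q ^ t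

/-- `K(n|q) = Σ_M q^{cr(M)}` over inhomogeneous perfect matchings. -/
noncomputable def Kq {m : ℕ} (n : Fin m → ℕ) (q : ℝ) : ℝ :=
  ∑ P ∈ matchings n, q ^ crossNum (total n) P


-- AUX LAYER 1

variable {m : ℕ}

lemma psum_succ_le (n : Fin m → ℕ) {j t : Fin m} (h : j < t) :
    psum n j + n j ≤ psum n t := by
  have h1 : psum n j + n j
      = ∑ s : Fin m, ((if s < j then n s else 0) + if s = j then n s else 0) := by
    rw [Finset.sum_add_distrib]
    simp [psum]
  rw [h1, psum]
  apply Finset.sum_le_sum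
  intro s _
  rcases lt_trichotomy s j with hs | hs | hs
  · have : s < t := lt_trans hs h
    simp [hs, this, hs.ne]
  · subst hs
    simp [lt_irrefl, h]
  · simp [not_lt_of_gt hs, (hs.ne').symm, hs.ne']

lemma psum_add_le_total (n : Fin m → ℕ) (j : Fin m) : psum n j + n j ≤ total n := by
  have h1 : psum n j + n j
      = ∑ s : Fin m, ((if s < j then n s else 0) + if s = j then n s else 0) := by
    rw [Finset.sum_add_distrib]
    simp [psum]
  rw [h1, total]
  apply Finset.sum_le_sum
  intro s _
  rcases lt_trichotomy s j with hs | hs | hs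
  · simp [hs, hs.ne]
  · subst hs; simp [Nat.add_comm]
  · simp [not_lt_of_gt hs, hs.ne']

lemma inBox_lt_total {n : Fin m → ℕ} {j : Fin m} {x : ℕ} (h : inBox n j x) :
    x < total n := lt_of_lt_of_le h.2 (psum_add_le_total n j)

lemma box_disjoint {n : Fin m → ℕ} {j t : Fin m} {x : ℕ}
    (h1 : inBox n j x) (h2 : inBox n t x) : j = t := by
  by_contra hne
  rcases lt_or_gt_of_ne hne with h | h
  · have := psum_succ_le n h; obtain ⟨a1, a2⟩ := h1; obtain ⟨b1, b2⟩ := h2; omega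
  · have := psum_succ_le n h; obtain ⟨a1, a2⟩ := h1; obtain ⟨b1, b2⟩ := h2; omega

lemma psum_update_of_le {n : Fin m → ℕ} {j t : Fin m} (v : ℕ) (h : t ≤ j) :
    psum (Function.update n j v) t = psum n t := by
  unfold psum
  apply Finset.sum_congr rfl
  intro s _
  by_cases hs : s < t
  · have : s ≠ j := by
      intro he; subst he; exact absurd (lt_of_lt_of_le hs h) (lt_irrefl _)
    simp [hs, Function.update_of_ne this]
  · simp [hs]

lemma psum_update_of_gt {n : Fin m → ℕ} {j t : Fin m} (v : ℕ) (h : j < t) :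
    psum (Function.update n j v) t + n j = psum n t + v := by
  unfold psum
  have hL : (∑ s : Fin m, if s < t then Function.update n j v s else 0) + n j
      = ∑ s : Fin m, ((if s < t then Function.update n j v s else 0)
          + if s = j then n s else 0) := by
    rw [Finset.sum_add_distrib]; simp
  have hR : (∑ s : Fin m, if s < t then n s else 0) + v
      = ∑ s : Fin m, ((if s < t then n s else 0)
          + if s = j then Function.update n j v s else 0) := by
    rw [Finset.sum_add_distrib]; simp
  rw [hL, hR]
  apply Finset.sum_congr rfl
  intro s _
  by_cases hs : s = j
  · subst hs; simp [h, Nat.add_comm]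
  · simp [Function.update_of_ne hs, hs]

lemma total_update {n : Fin m → ℕ} {j : Fin m} (v : ℕ) :
    total (Function.update n j v) + n j = total n + v := by
  unfold total
  have hL : (∑ s : Fin m, Function.update n j v s) + n j
      = ∑ s : Fin m, (Function.update n j v s + if s = j then n s else 0) := by
    rw [Finset.sum_add_distrib]; simp
  have hR : (∑ s : Fin m, n s) + v
      = ∑ s : Fin m, (n s + if s = j then Function.update n j v s else 0) := by
    rw [Finset.sum_add_distrib]; simp
  rw [hL, hR]
  apply Finset.sum_congr rfl
  intro s _
  by_cases hs : s = j
  · subst hs; simp [Nat.add_comm]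
  · simp [Function.update_of_ne hs, hs]

lemma psum_next {n : Fin m → ℕ} {j t : Fin m} (h : (t : ℕ) = (j : ℕ) + 1) :
    psum n t = psum n j + n j := by
  unfold psum
  have hR : (∑ s : Fin m, if s < j then n s else 0) + n j
      = ∑ s : Fin m, ((if s < j then n s else 0) + if s = j then n s else 0) := by
    rw [Finset.sum_add_distrib]; simp
  rw [hR]
  apply Finset.sum_congr rfl
  intro s _
  rcases lt_trichotomy s j with hs | hs | hs
  · have hst : s < t := by rw [Fin.lt_def] at *; omega
    simp [hst, hs, hs.ne]
  · subst hs
    have hst : s < t := by rw [Fin.lt_def]; omega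
    simp [hst, lt_irrefl]
  · have hst : ¬ s < t := by rw [Fin.lt_def] at *; omega
    simp [hst, not_lt_of_gt hs, hs.ne']


-- AUX LAYER 2
lemma card_filter_eq_one_iff {α : Type*} (s : Finset α) (p : α → Prop) [DecidablePred p] :
    (s.filter p).card = 1 ↔ ∃! a, a ∈ s ∧ p a := by
  rw [Finset.card_eq_one]
  constructor
  · rintro ⟨b, hb⟩
    refine ⟨b, ?_, ?_⟩
    · have : b ∈ s.filter p := by rw [hb]; exact Finset.mem_singleton_self b
      exact ⟨(Finset.mem_filter.1 this).1, (Finset.mem_filter.1 this).2⟩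
    · intro y hy
      have : y ∈ s.filter p := Finset.mem_filter.2 hy
      rw [hb] at this; exact Finset.mem_singleton.1 this
  · rintro ⟨b, hb, hun⟩
    refine ⟨b, ?_⟩
    ext y
    rw [Finset.mem_filter, Finset.mem_singleton]
    constructor
    · intro hy; exact hun y hy
    · intro hy; subst hy; exact hb

lemma existsUnique_block {N : ℕ} {P : Finset (Finset ℕ)} (h : IsPartitionOf N P)
    {x : ℕ} (hx : x < N) : ∃! b, b ∈ P ∧ x ∈ b := by
  have := h.2 x (Finset.mem_range.2 hx)
  exact (card_filter_eq_one_iff P _).1 this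

lemma block_eq_pair {P : Finset (Finset ℕ)} (hcard : ∀ b ∈ P, b.card = 2)
    {b : Finset ℕ} (hb : b ∈ P) {i k : ℕ} (hi : i ∈ b) (hk : k ∈ b) (hik : i ≠ k) :
    b = {i, k} := by
  have hsub : ({i, k} : Finset ℕ) ⊆ b := by
    intro t ht
    rcases Finset.mem_insert.1 ht with h | h
    · subst h; exact hi
    · rw [Finset.mem_singleton.1 h]; exact hk
  have hc : ({i, k} : Finset ℕ).card = 2 := Finset.card_pair hik
  exact (Finset.eq_of_subset_of_card_le hsub (by rw [hc, hcard b hb])).symm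

lemma mem_of_pair_mem {N : ℕ} {P : Finset (Finset ℕ)} (h : IsPartitionOf N P)
    {x y : ℕ} (hxy : ({x, y} : Finset ℕ) ∈ P) : x < N ∧ y < N := by
  have h1 := (h.1 _ hxy).1
  constructor
  · exact Finset.mem_range.1 (h1 (by simp))
  · exact Finset.mem_range.1 (h1 (by simp))

lemma pair_unique {N : ℕ} {P : Finset (Finset ℕ)} (h : IsPartitionOf N P)
    {x y z : ℕ} (h1 : ({x, y} : Finset ℕ) ∈ P) (h2 : ({x, z} : Finset ℕ) ∈ P) :
    y = z := by
  have hx : x < N := (mem_of_pair_mem h h1).1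
  obtain ⟨b, _, hun⟩ := existsUnique_block h hx
  have e1 : ({x, y} : Finset ℕ) = b := hun _ ⟨h1, by simp⟩
  have e2 : ({x, z} : Finset ℕ) = b := hun _ ⟨h2, by simp⟩
  have hz : z ∈ ({x, y} : Finset ℕ) := by rw [e1, ← e2]; simp
  have hy : y ∈ ({x, z} : Finset ℕ) := by rw [e2, ← e1]; simp
  simp only [Finset.mem_insert, Finset.mem_singleton] at hz hy
  omega

lemma exists_partner {N : ℕ} {P : Finset (Finset ℕ)} (h : IsPartitionOf N P)
    (hcard : ∀ b ∈ P, b.card = 2) {x : ℕ} (hx : x < N) :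
    ∃ y, y ≠ x ∧ ({x, y} : Finset ℕ) ∈ P := by
  obtain ⟨b, ⟨hbP, hxb⟩, _⟩ := existsUnique_block h hx
  have hc := hcard b hbP
  rw [Finset.card_eq_two] at hc
  obtain ⟨u, v, huv, rfl⟩ := hc
  rcases Finset.mem_insert.1 hxb with h' | h'
  · subst h'; exact ⟨v, huv.symm, hbP⟩
  · rw [Finset.mem_singleton.1 h']
    refine ⟨u, huv, ?_⟩
    rwa [Finset.pair_comm]

lemma block_eq_of_mem {N : ℕ} {P : Finset (Finset ℕ)} (h : IsPartitionOf N P)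
    {b b' : Finset ℕ} (hb : b ∈ P) (hb' : b' ∈ P) {x : ℕ} (hx : x ∈ b) (hx' : x ∈ b') :
    b = b' := by
  have hxN : x < N := Finset.mem_range.1 ((h.1 b hb).1 hx)
  obtain ⟨c, _, hun⟩ := existsUnique_block h hxN
  rw [hun b ⟨hb, hx⟩, hun b' ⟨hb', hx'⟩]

lemma isArc_iff {N : ℕ} {P : Finset (Finset ℕ)} (h : IsPartitionOf N P)
    (hcard : ∀ b ∈ P, b.card = 2) {i j : ℕ} :
    IsArc P i j ↔ i < j ∧ ({i, j} : Finset ℕ) ∈ P := by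
  constructor
  · rintro ⟨hij, b, hbP, hib, hjb, _⟩
    exact ⟨hij, block_eq_pair hcard hbP hib hjb hij.ne ▸ hbP⟩
  · rintro ⟨hij, hm⟩
    refine ⟨hij, {i, j}, hm, by simp, by simp, ?_⟩
    intro t ht
    rcases Finset.mem_insert.1 ht with h' | h'
    · subst h'; omega
    · rw [Finset.mem_singleton.1 h']; omega

noncomputable def partner (P : Finset (Finset ℕ)) (x : ℕ) : ℕ :=
  if h : ∃ y, y ≠ x ∧ ({x, y} : Finset ℕ) ∈ P then h.choose else 0

lemma partner_spec {N : ℕ} {P : Finset (Finset ℕ)} (h : IsPartitionOf N P)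
    (hcard : ∀ b ∈ P, b.card = 2) {x : ℕ} (hx : x < N) :
    partner P x ≠ x ∧ ({x, partner P x} : Finset ℕ) ∈ P := by
  have he := exists_partner h hcard hx
  rw [partner, dif_pos he]
  exact he.choose_spec

lemma partner_eq {N : ℕ} {P : Finset (Finset ℕ)} (h : IsPartitionOf N P)
    (hcard : ∀ b ∈ P, b.card = 2) {x y : ℕ} (hxy : ({x, y} : Finset ℕ) ∈ P)
    (hne : y ≠ x) : partner P x = y := by
  have hx : x < N := (mem_of_pair_mem h hxy).1
  have hs := partner_spec h hcard hx
  exact pair_unique h hs.2 hxy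


-- AUX LAYER 3
section L3
variable {N a b : ℕ} {P : Finset (Finset ℕ)}

def dmap (a b x : ℕ) : ℕ := if x < a then x else if x < b then x - 1 else x - 2

def umap (a b x : ℕ) : ℕ := if x < a then x else if x + 1 < b then x + 1 else x + 2

lemma dmap_umap (hab : a < b) (x : ℕ) : dmap a b (umap a b x) = x := by
  simp only [dmap, umap]; split_ifs <;> omega

lemma umap_dmap (hab : a < b) {x : ℕ} (hxa : x ≠ a) (hxb : x ≠ b) :
    umap a b (dmap a b x) = x := by
  simp only [dmap, umap]; split_ifs <;> omega

lemma umap_ne (hab : a < b) (x : ℕ) : umap a b x ≠ a ∧ umap a b x ≠ b := by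
  simp only [umap]; split_ifs <;> omega

lemma umap_mono (hab : a < b) {x y : ℕ} (h : x < y) : umap a b x < umap a b y := by
  simp only [umap]; split_ifs <;> omega

lemma dmap_mono (hab : a < b) {x y : ℕ} (hxa : x ≠ a) (hxb : x ≠ b)
    (hya : y ≠ a) (hyb : y ≠ b) (h : x < y) : dmap a b x < dmap a b y := by
  simp only [dmap]; split_ifs <;> omega

lemma umap_lt {x : ℕ} (h : x < N) : umap a b x < N + 2 := by
  simp only [umap]; split_ifs <;> omega

lemma dmap_lt (hab : a < b) (hbN : b < N + 2) {x : ℕ} (hx : x < N + 2)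
    (hxa : x ≠ a) (hxb : x ≠ b) : dmap a b x < N := by
  simp only [dmap]; split_ifs <;> omega

noncomputable def cmpr (a b : ℕ) (P : Finset (Finset ℕ)) : Finset (Finset ℕ) :=
  (P.erase {a, b}).image (fun blk => blk.image (dmap a b))

noncomputable def xpnd (a b : ℕ) (P : Finset (Finset ℕ)) : Finset (Finset ℕ) :=
  insert {a, b} (P.image (fun blk => blk.image (umap a b)))

lemma not_mem_block (hP : IsPartitionOf (N + 2) P) {blk : Finset ℕ}
    (hm : ({a, b} : Finset ℕ) ∈ P) (hblk : blk ∈ P) (hne : blk ≠ ({a, b} : Finset ℕ)) :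
    a ∉ blk ∧ b ∉ blk := by
  constructor
  · intro hca
    exact hne (block_eq_of_mem hP hblk hm hca (by simp))
  · intro hcb
    exact hne (block_eq_of_mem hP hblk hm hcb (by simp))

lemma block_ne_ab (hP : IsPartitionOf (N + 2) P) (hab : a < b)
    (hm : ({a, b} : Finset ℕ) ∈ P) {x y : ℕ} (hxy : ({x, y} : Finset ℕ) ∈ P)
    (hlt : x < y) (hxa : x ≠ a) :
    ({x, y} : Finset ℕ) ≠ ({a, b} : Finset ℕ) ∧ x ≠ b ∧ y ≠ a ∧ y ≠ b := by
  have hne : ({x, y} : Finset ℕ) ≠ ({a, b} : Finset ℕ) := by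
    intro he
    have hx : x ∈ ({a, b} : Finset ℕ) := by rw [← he]; simp
    have hy : y ∈ ({a, b} : Finset ℕ) := by rw [← he]; simp
    simp only [Finset.mem_insert, Finset.mem_singleton] at hx hy
    omega
  have := not_mem_block hP hm hxy hne
  refine ⟨hne, ?_, ?_, ?_⟩
  · intro he; exact this.2 (by subst he; simp)
  · intro he; exact this.1 (by subst he; simp)
  · intro he; exact this.2 (by subst he; simp)

lemma mem_cmpr_of (hab : a < b) {blk : Finset ℕ} (hblk : blk ∈ P)
    (hne : blk ≠ ({a, b} : Finset ℕ)) : blk.image (dmap a b) ∈ cmpr a b P := by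
  exact Finset.mem_image_of_mem _ (Finset.mem_erase.2 ⟨hne, hblk⟩)

lemma pair_mem_cmpr (hP : IsPartitionOf (N + 2) P) (hcard : ∀ blk ∈ P, blk.card = 2)
    (hab : a < b) (hm : ({a, b} : Finset ℕ) ∈ P) {x y : ℕ} :
    ({x, y} : Finset ℕ) ∈ cmpr a b P ↔ ({umap a b x, umap a b y} : Finset ℕ) ∈ P := by
  constructor
  · intro h
    obtain ⟨blk, hblk, himg⟩ := Finset.mem_image.1 h
    have hblkP := (Finset.mem_erase.1 hblk).2
    have hblkne := (Finset.mem_erase.1 hblk).1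
    have hnm := not_mem_block hP hm hblkP hblkne
    have : blk.image (umap a b ∘ dmap a b) = blk := by
      rw [show umap a b ∘ dmap a b = fun z => umap a b (dmap a b z) from rfl]
      rw [Finset.image_congr (g := id), Finset.image_id]
      intro z hz
      exact umap_dmap hab (by rintro rfl; exact hnm.1 hz) (by rintro rfl; exact hnm.2 hz)
    have h2 : ({x, y} : Finset ℕ).image (umap a b) = blk := by
      rw [← himg, Finset.image_image]; exact this
    rw [Finset.image_insert, Finset.image_singleton] at h2
    rw [h2]; exact hblkP
  · intro h
    have hne : ({umap a b x, umap a b y} : Finset ℕ) ≠ ({a, b} : Finset ℕ) := by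
      intro he
      have : a ∈ ({umap a b x, umap a b y} : Finset ℕ) := by rw [he]; simp
      simp only [Finset.mem_insert, Finset.mem_singleton] at this
      rcases this with h' | h'
      · exact (umap_ne hab x).1 h'.symm
      · exact (umap_ne hab y).1 h'.symm
    have := mem_cmpr_of (P := P) hab h hne
    rwa [Finset.image_insert, Finset.image_singleton, dmap_umap hab, dmap_umap hab] at this

lemma cmpr_isPartition (hP : IsPartitionOf (N + 2) P)
    (hab : a < b) (hbN : b < N + 2) (hm : ({a, b} : Finset ℕ) ∈ P) :
    IsPartitionOf N (cmpr a b P) := by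
  constructor
  · intro b' hb'
    obtain ⟨blk, hblk, rfl⟩ := Finset.mem_image.1 hb'
    have hblkP := (Finset.mem_erase.1 hblk).2
    have hblkne := (Finset.mem_erase.1 hblk).1
    have hnm := not_mem_block hP hm hblkP hblkne
    constructor
    · intro z hz
      obtain ⟨w, hw, rfl⟩ := Finset.mem_image.1 hz
      have hwN : w < N + 2 := Finset.mem_range.1 ((hP.1 blk hblkP).1 hw)
      exact Finset.mem_range.2 (dmap_lt hab hbN hwN
        (by rintro rfl; exact hnm.1 hw) (by rintro rfl; exact hnm.2 hw))
    · exact ((hP.1 blk hblkP).2).image _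
  · intro i hi
    have hiN : i < N := Finset.mem_range.1 hi
    rw [card_filter_eq_one_iff]
    have huN : umap a b i < N + 2 := umap_lt hiN
    obtain ⟨blk, ⟨hblkP, hublk⟩, hun⟩ := existsUnique_block hP huN
    have hblkne : blk ≠ ({a, b} : Finset ℕ) := by
      rintro rfl
      simp only [Finset.mem_insert, Finset.mem_singleton] at hublk
      rcases hublk with h' | h'
      · exact (umap_ne hab i).1 h'
      · exact (umap_ne hab i).2 h'
    refine ⟨blk.image (dmap a b), ⟨mem_cmpr_of hab hblkP hblkne, ?_⟩, ?_⟩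
    · have : dmap a b (umap a b i) = i := dmap_umap hab i
      rw [← this]; exact Finset.mem_image_of_mem _ hublk
    · rintro b2 ⟨hb2, hib2⟩
      obtain ⟨blk2, hblk2, rfl⟩ := Finset.mem_image.1 hb2
      have hblk2P := (Finset.mem_erase.1 hblk2).2
      have hblk2ne := (Finset.mem_erase.1 hblk2).1
      have hnm2 := not_mem_block hP hm hblk2P hblk2ne
      obtain ⟨z, hz, hzi⟩ := Finset.mem_image.1 hib2
      have hz2 : z = umap a b i := by
        rw [← hzi, umap_dmap hab (by rintro rfl; exact hnm2.1 hz)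
          (by rintro rfl; exact hnm2.2 hz)]
      have : blk2 = blk := hun blk2 ⟨hblk2P, hz2 ▸ hz⟩
      rw [this]

lemma cmpr_card (hP : IsPartitionOf (N + 2) P) (hcard : ∀ blk ∈ P, blk.card = 2)
    (hab : a < b) (hm : ({a, b} : Finset ℕ) ∈ P) :
    ∀ b' ∈ cmpr a b P, b'.card = 2 := by
  intro b' hb'
  obtain ⟨blk, hblk, rfl⟩ := Finset.mem_image.1 hb'
  have hblkP := (Finset.mem_erase.1 hblk).2
  have hblkne := (Finset.mem_erase.1 hblk).1
  have hnm := not_mem_block hP hm hblkP hblkne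
  rw [Finset.card_image_of_injOn, hcard blk hblkP]
  intro x hx y hy hxy
  by_contra hne
  rcases lt_or_gt_of_ne hne with h | h
  · exact absurd hxy (Nat.ne_of_lt (dmap_mono hab (by rintro rfl; exact hnm.1 hx)
      (by rintro rfl; exact hnm.2 hx) (by rintro rfl; exact hnm.1 hy)
      (by rintro rfl; exact hnm.2 hy) h))
  · exact absurd hxy.symm (Nat.ne_of_lt (dmap_mono hab (by rintro rfl; exact hnm.1 hy)
      (by rintro rfl; exact hnm.2 hy) (by rintro rfl; exact hnm.1 hx)
      (by rintro rfl; exact hnm.2 hx) h))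

end L3


-- AUX L4
section L4
variable {N a b : ℕ} {P : Finset (Finset ℕ)}

lemma pair_not_mem_image (hab : a < b) (P' : Finset (Finset ℕ)) :
    ({a, b} : Finset ℕ) ∉ P'.image (fun blk => blk.image (umap a b)) := by
  intro h
  obtain ⟨blk, _, himg⟩ := Finset.mem_image.1 h
  have ha : a ∈ blk.image (umap a b) := by rw [himg]; simp
  obtain ⟨z, _, hz⟩ := Finset.mem_image.1 ha
  exact (umap_ne hab z).1 hz

lemma cmpr_xpnd (hab : a < b) (P' : Finset (Finset ℕ)) :
    cmpr a b (xpnd a b P') = P' := by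
  unfold cmpr xpnd
  rw [Finset.erase_insert (pair_not_mem_image hab P')]
  rw [Finset.image_image]
  have : ∀ blk ∈ P', (blk.image (umap a b)).image (dmap a b) = blk := by
    intro blk _
    rw [Finset.image_image]
    rw [Finset.image_congr (g := id), Finset.image_id]
    intro z _
    exact dmap_umap hab z
  calc P'.image ((fun blk => blk.image (dmap a b)) ∘ (fun blk => blk.image (umap a b)))
      = P'.image id := by
        apply Finset.image_congr
        intro blk hblk
        simpa [Finset.image_image] using this blk hblk
    _ = P' := Finset.image_id

lemma xpnd_cmpr (hP : IsPartitionOf (N + 2) P) (hab : a < b)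
    (hm : ({a, b} : Finset ℕ) ∈ P) : xpnd a b (cmpr a b P) = P := by
  unfold cmpr xpnd
  rw [Finset.image_image]
  have : (P.erase {a, b}).image
      ((fun blk => blk.image (umap a b)) ∘ (fun blk => blk.image (dmap a b)))
      = (P.erase {a, b}).image id := by
    apply Finset.image_congr
    intro blk hblk
    have hblkP := (Finset.mem_erase.1 hblk).2
    have hblkne := (Finset.mem_erase.1 hblk).1
    have hnm := not_mem_block hP hm hblkP hblkne
    simp only [Function.comp_apply, Finset.image_image, id]
    rw [Finset.image_congr (g := id), Finset.image_id]
    intro z hz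
    exact umap_dmap hab (by rintro rfl; exact hnm.1 hz) (by rintro rfl; exact hnm.2 hz)
  rw [this, Finset.image_id, Finset.insert_erase hm]

lemma xpnd_isPartition {P' : Finset (Finset ℕ)} (hP' : IsPartitionOf N P')
    (hab : a < b) (hbN : b < N + 2) :
    IsPartitionOf (N + 2) (xpnd a b P') := by
  constructor
  · intro b' hb'
    rcases Finset.mem_insert.1 hb' with rfl | hb'
    · constructor
      · intro z hz
        simp only [Finset.mem_insert, Finset.mem_singleton] at hz
        rcases hz with rfl | rfl
        · exact Finset.mem_range.2 (by omega)
        · exact Finset.mem_range.2 hbN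
      · exact ⟨a, by simp⟩
    · obtain ⟨blk, hblk, rfl⟩ := Finset.mem_image.1 hb'
      constructor
      · intro z hz
        obtain ⟨w, hw, rfl⟩ := Finset.mem_image.1 hz
        have : w < N := Finset.mem_range.1 ((hP'.1 blk hblk).1 hw)
        exact Finset.mem_range.2 (umap_lt this)
      · exact ((hP'.1 blk hblk).2).image _
  · intro i hi
    have hiN : i < N + 2 := Finset.mem_range.1 hi
    rw [card_filter_eq_one_iff]
    by_cases hia : i = a ∨ i = b
    · refine ⟨{a, b}, ⟨Finset.mem_insert_self _ _, ?_⟩, ?_⟩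
      · rcases hia with rfl | rfl <;> simp
      · rintro b2 ⟨hb2, hib2⟩
        rcases Finset.mem_insert.1 hb2 with rfl | hb2
        · rfl
        · exfalso
          obtain ⟨blk, _, rfl⟩ := Finset.mem_image.1 hb2
          obtain ⟨z, _, hz⟩ := Finset.mem_image.1 hib2
          rcases hia with rfl | rfl
          · exact (umap_ne hab z).1 hz
          · exact (umap_ne hab z).2 hz
    · push_neg at hia
      have hdN : dmap a b i < N := dmap_lt hab hbN hiN hia.1 hia.2
      obtain ⟨blk, ⟨hblkP, hdblk⟩, hun⟩ := existsUnique_block hP' hdN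
      refine ⟨blk.image (umap a b), ⟨Finset.mem_insert_of_mem
        (Finset.mem_image_of_mem _ hblkP), ?_⟩, ?_⟩
      · have : umap a b (dmap a b i) = i := umap_dmap hab hia.1 hia.2
        rw [← this]; exact Finset.mem_image_of_mem _ hdblk
      · rintro b2 ⟨hb2, hib2⟩
        rcases Finset.mem_insert.1 hb2 with rfl | hb2
        · exfalso
          simp only [Finset.mem_insert, Finset.mem_singleton] at hib2
          rcases hib2 with rfl | rfl
          · exact hia.1 rfl
          · exact hia.2 rfl
        · obtain ⟨blk2, hblk2, rfl⟩ := Finset.mem_image.1 hb2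
          obtain ⟨z, hz, hzi⟩ := Finset.mem_image.1 hib2
          have hz2 : z = dmap a b i := by rw [← hzi, dmap_umap hab]
          have : blk2 = blk := hun blk2 ⟨hblk2, hz2 ▸ hz⟩
          rw [this]

lemma xpnd_card {P' : Finset (Finset ℕ)} (hcard : ∀ blk ∈ P', blk.card = 2)
    (hab : a < b) : ∀ b' ∈ xpnd a b P', b'.card = 2 := by
  intro b' hb'
  rcases Finset.mem_insert.1 hb' with rfl | hb'
  · exact Finset.card_pair hab.ne
  · obtain ⟨blk, hblk, rfl⟩ := Finset.mem_image.1 hb'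
    rw [Finset.card_image_of_injOn, hcard blk hblk]
    intro x _ y _ hxy
    by_contra hne
    rcases lt_or_gt_of_ne hne with h | h
    · exact absurd hxy (Nat.ne_of_lt (umap_mono hab h))
    · exact absurd hxy.symm (Nat.ne_of_lt (umap_mono hab h))

end L4

-- AUX L5
section L5
variable {N a b : ℕ} {P : Finset (Finset ℕ)}

lemma crossNum_erase (hP : IsPartitionOf (N + 2) P) (hcard : ∀ blk ∈ P, blk.card = 2)
    (hab : a < b) (hbN : b < N + 2) (hm : ({a, b} : Finset ℕ) ∈ P)
    (hspan : ∀ x y, ({x, y} : Finset ℕ) ∈ P → a < x → x < b → y < a ∨ b < y) :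
    crossNum (N + 2) P = crossNum N (cmpr a b P) + (b - a - 1) := by
  have hQP : IsPartitionOf N (cmpr a b P) := cmpr_isPartition hP hab hbN hm
  have hQc : ∀ b' ∈ cmpr a b P, b'.card = 2 := cmpr_card hP hcard hab hm
  set C := (((Finset.range (N + 2) ×ˢ Finset.range (N + 2)) ×ˢ
      (Finset.range (N + 2) ×ˢ Finset.range (N + 2))).filter
      (fun q => IsArc P q.1.1 q.1.2 ∧ IsArc P q.2.1 q.2.2 ∧
        q.1.1 < q.2.1 ∧ q.2.1 < q.1.2 ∧ q.1.2 < q.2.2)) with hC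
  set C' := (((Finset.range N ×ˢ Finset.range N) ×ˢ
      (Finset.range N ×ˢ Finset.range N)).filter
      (fun q => IsArc (cmpr a b P) q.1.1 q.1.2 ∧ IsArc (cmpr a b P) q.2.1 q.2.2 ∧
        q.1.1 < q.2.1 ∧ q.2.1 < q.1.2 ∧ q.1.2 < q.2.2)) with hC'
  have e1 : crossNum (N + 2) P = C.card := rfl
  have e2 : crossNum N (cmpr a b P) = C'.card := rfl
  have hmem : ∀ q : (ℕ × ℕ) × ℕ × ℕ, q ∈ C ↔
      ((q.1.1 < N + 2 ∧ q.1.2 < N + 2 ∧ q.2.1 < N + 2 ∧ q.2.2 < N + 2) ∧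
        ({q.1.1, q.1.2} : Finset ℕ) ∈ P ∧ ({q.2.1, q.2.2} : Finset ℕ) ∈ P) ∧
        q.1.1 < q.2.1 ∧ q.2.1 < q.1.2 ∧ q.1.2 < q.2.2 := by
    intro q
    rw [hC, Finset.mem_filter]
    simp only [Finset.mem_product, Finset.mem_range, isArc_iff hP hcard]
    constructor
    · rintro ⟨⟨⟨h1, h2⟩, h3, h4⟩, ⟨_, m1⟩, ⟨_, m2⟩, c1, c2, c3⟩
      exact ⟨⟨⟨h1, h2, h3, h4⟩, m1, m2⟩, c1, c2, c3⟩
    · rintro ⟨⟨⟨h1, h2, h3, h4⟩, m1, m2⟩, c1, c2, c3⟩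
      exact ⟨⟨⟨h1, h2⟩, h3, h4⟩, ⟨by omega, m1⟩, ⟨by omega, m2⟩, c1, c2, c3⟩
  have hmem' : ∀ q : (ℕ × ℕ) × ℕ × ℕ, q ∈ C' ↔
      ((q.1.1 < N ∧ q.1.2 < N ∧ q.2.1 < N ∧ q.2.2 < N) ∧
        ({q.1.1, q.1.2} : Finset ℕ) ∈ cmpr a b P ∧
        ({q.2.1, q.2.2} : Finset ℕ) ∈ cmpr a b P) ∧
        q.1.1 < q.2.1 ∧ q.2.1 < q.1.2 ∧ q.1.2 < q.2.2 := by
    intro q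
    rw [hC', Finset.mem_filter]
    simp only [Finset.mem_product, Finset.mem_range, isArc_iff hQP hQc]
    constructor
    · rintro ⟨⟨⟨h1, h2⟩, h3, h4⟩, ⟨_, m1⟩, ⟨_, m2⟩, c1, c2, c3⟩
      exact ⟨⟨⟨h1, h2, h3, h4⟩, m1, m2⟩, c1, c2, c3⟩
    · rintro ⟨⟨⟨h1, h2, h3, h4⟩, m1, m2⟩, c1, c2, c3⟩
      exact ⟨⟨⟨h1, h2⟩, h3, h4⟩, ⟨by omega, m1⟩, ⟨by omega, m2⟩, c1, c2, c3⟩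
  have hpart1 : (C.filter (fun q => q.1.1 = a ∨ q.2.1 = a)).card = b - a - 1 := by
    rw [show b - a - 1 = (Finset.Ioo a b).card by rw [Nat.card_Ioo]]
    apply Finset.card_nbij' (i := fun q => if q.1.1 = a then q.2.1 else q.1.2)
      (j := fun t => if b < partner P t then ((a, b), (t, partner P t))
        else ((partner P t, t), (a, b)))
    · intro q hq
      obtain ⟨hqC, hp⟩ := Finset.mem_filter.1 hq
      obtain ⟨⟨hbd, m1, m2⟩, c1, c2, c3⟩ := (hmem q).1 hqC
      simp only [Finset.mem_coe]
      by_cases h11 : q.1.1 = a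
      · rw [if_pos h11]
        have h12 : q.1.2 = b := pair_unique hP (h11 ▸ m1) hm
        exact Finset.mem_Ioo.2 ⟨h11 ▸ c1, h12 ▸ c2⟩
      · rw [if_neg h11]
        have h21 : q.2.1 = a := hp.resolve_left h11
        have h22 : q.2.2 = b := pair_unique hP (h21 ▸ m2) hm
        exact Finset.mem_Ioo.2 ⟨h21 ▸ c2, h22 ▸ c3⟩
    · intro t ht
      simp only [Finset.mem_coe]
      obtain ⟨hat, htb⟩ := Finset.mem_Ioo.1 ht
      have htN : t < N + 2 := by omega
      obtain ⟨hpne, hpm⟩ := partner_spec hP hcard htN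
      have hu : partner P t < a ∨ b < partner P t := hspan t _ hpm hat htb
      have huN : partner P t < N + 2 := (mem_of_pair_mem hP hpm).2
      rcases hu with hu | hu
      · rw [if_neg (by omega)]
        rw [Finset.mem_filter]
        constructor
        · rw [hmem]
          dsimp only
          refine ⟨⟨⟨by omega, by omega, by omega, by omega⟩, ?_, hm⟩, by omega, by omega, by omega⟩
          rw [Finset.pair_comm]; exact hpm
        · dsimp only
          right; rfl
      · rw [if_pos hu]
        rw [Finset.mem_filter]
        constructor
        · rw [hmem]
          dsimp only
          exact ⟨⟨⟨by omega, by omega, by omega, by omega⟩, hm, hpm⟩, by omega, by omega, by omega⟩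
        · dsimp only
          left; rfl
    · intro q hq
      obtain ⟨hqC, hp⟩ := Finset.mem_filter.1 hq
      obtain ⟨⟨hbd, m1, m2⟩, c1, c2, c3⟩ := (hmem q).1 hqC
      obtain ⟨⟨x1, x2⟩, x3, x4⟩ := q
      simp only at hbd m1 m2 c1 c2 c3 hp ⊢
      by_cases h11 : x1 = a
      · rw [if_pos h11]
        have h12 : x2 = b := pair_unique hP (h11 ▸ m1) hm
        have hpt : partner P x3 = x4 := partner_eq hP hcard m2 (by omega)
        rw [hpt, if_pos (by omega)]
        rw [h11, h12]
      · rw [if_neg h11]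
        have h21 : x3 = a := hp.resolve_left h11
        have h22 : x4 = b := pair_unique hP (h21 ▸ m2) hm
        have hpt : partner P x2 = x1 := by
          apply partner_eq hP hcard (by rw [Finset.pair_comm]; exact m1) (by omega)
        rw [hpt, if_neg (by omega)]
        rw [h21, h22]
    · intro t ht
      dsimp only
      obtain ⟨hat, htb⟩ := Finset.mem_Ioo.1 ht
      have htN : t < N + 2 := by omega
      obtain ⟨hpne, hpm⟩ := partner_spec hP hcard htN
      have hu : partner P t < a ∨ b < partner P t := hspan t _ hpm hat htb
      rcases hu with hu | hu
      · rw [if_neg (show ¬ b < partner P t by omega)]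
        dsimp only
        rw [if_neg (show ¬ partner P t = a by omega)]
      · rw [if_pos hu]
        dsimp only
        rw [if_pos rfl]
  have hpart2 : (C.filter (fun q => ¬ (q.1.1 = a ∨ q.2.1 = a))).card = C'.card := by
    apply Finset.card_nbij'
      (i := fun q => ((dmap a b q.1.1, dmap a b q.1.2), (dmap a b q.2.1, dmap a b q.2.2)))
      (j := fun q => ((umap a b q.1.1, umap a b q.1.2), (umap a b q.2.1, umap a b q.2.2)))
    · intro q hq
      obtain ⟨hqC, hp⟩ := Finset.mem_filter.1 hq
      push_neg at hp
      obtain ⟨⟨hbd, m1, m2⟩, c1, c2, c3⟩ := (hmem q).1 hqC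
      obtain ⟨hne1, hx1b, hx2a, hx2b⟩ := block_ne_ab hP hab hm m1 (by omega) hp.1
      obtain ⟨hne2, hx3b, hx4a, hx4b⟩ := block_ne_ab hP hab hm m2 (by omega) hp.2
      simp only [Finset.mem_coe]
      rw [hmem']
      refine ⟨⟨⟨dmap_lt hab hbN (by omega) hp.1 hx1b, dmap_lt hab hbN (by omega) hx2a hx2b,
        dmap_lt hab hbN (by omega) hp.2 hx3b, dmap_lt hab hbN (by omega) hx4a hx4b⟩, ?_, ?_⟩,
        dmap_mono hab hp.1 hx1b hp.2 hx3b c1, dmap_mono hab hp.2 hx3b hx2a hx2b c2,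
        dmap_mono hab hx2a hx2b hx4a hx4b c3⟩
      · rw [pair_mem_cmpr hP hcard hab hm, umap_dmap hab hp.1 hx1b, umap_dmap hab hx2a hx2b]
        exact m1
      · rw [pair_mem_cmpr hP hcard hab hm, umap_dmap hab hp.2 hx3b, umap_dmap hab hx4a hx4b]
        exact m2
    · intro q hq
      obtain ⟨⟨hbd, m1, m2⟩, c1, c2, c3⟩ := (hmem' q).1 hq
      rw [pair_mem_cmpr hP hcard hab hm] at m1 m2
      simp only [Finset.mem_coe]
      rw [Finset.mem_filter]
      constructor
      · rw [hmem]
        exact ⟨⟨⟨umap_lt hbd.1, umap_lt hbd.2.1, umap_lt hbd.2.2.1, umap_lt hbd.2.2.2⟩, m1, m2⟩,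
          umap_mono hab c1, umap_mono hab c2, umap_mono hab c3⟩
      · push_neg
        exact ⟨(umap_ne hab _).1, (umap_ne hab _).1⟩
    · intro q hq
      obtain ⟨hqC, hp⟩ := Finset.mem_filter.1 hq
      push_neg at hp
      obtain ⟨⟨hbd, m1, m2⟩, c1, c2, c3⟩ := (hmem q).1 hqC
      obtain ⟨hne1, hx1b, hx2a, hx2b⟩ := block_ne_ab hP hab hm m1 (by omega) hp.1
      obtain ⟨hne2, hx3b, hx4a, hx4b⟩ := block_ne_ab hP hab hm m2 (by omega) hp.2
      obtain ⟨⟨x1, x2⟩, x3, x4⟩ := q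
      simp only at hp hx1b hx2a hx2b hx3b hx4a hx4b ⊢
      rw [umap_dmap hab hp.1 hx1b, umap_dmap hab hx2a hx2b,
        umap_dmap hab hp.2 hx3b, umap_dmap hab hx4a hx4b]
    · intro q hq
      obtain ⟨⟨x1, x2⟩, x3, x4⟩ := q
      simp only
      rw [dmap_umap hab, dmap_umap hab, dmap_umap hab, dmap_umap hab]
  have hsplit := Finset.card_filter_add_card_filter_not (s := C)
    (p := fun q => q.1.1 = a ∨ q.2.1 = a)
  rw [e1, e2]
  omega

end L5

-- AUX L6
section L6
variable {m : ℕ}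

def unshift (c x : ℕ) : ℕ := if x < c then x else x - 1

def sameBoxC {m : ℕ} (n : Fin m → ℕ) (c i k : ℕ) : Prop :=
  i ≠ c ∧ k ≠ c ∧ sameBox n (unshift c i) (unshift c k)

noncomputable def cmatchings {m : ℕ} (n : Fin m → ℕ) (c : ℕ) : Finset (Finset (Finset ℕ)) :=
  ((Finset.range (total n + 1)).powerset.powerset).filter
    (fun P => IsPartitionOf (total n + 1) P ∧ (∀ b ∈ P, b.card = 2) ∧
      ∀ b ∈ P, ∀ i ∈ b, ∀ k ∈ b, i ≠ k → ¬ sameBoxC n c i k)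

noncomputable def KqC {m : ℕ} (n : Fin m → ℕ) (c : ℕ) (q : ℝ) : ℝ :=
  ∑ P ∈ cmatchings n c, q ^ crossNum (total n + 1) P

variable {n : Fin m → ℕ} {j : Fin m} {c : ℕ}

lemma mem_pp {M : ℕ} {P : Finset (Finset ℕ)} :
    P ∈ (Finset.range M).powerset.powerset ↔ ∀ blk ∈ P, blk ⊆ Finset.range M := by
  rw [Finset.mem_powerset]
  constructor
  · intro h blk hblk
    exact Finset.mem_powerset.1 (h hblk)
  · intro h blk hblk
    exact Finset.mem_powerset.2 (h blk hblk)

lemma mem_matchings {n' : Fin m → ℕ} {P : Finset (Finset ℕ)} :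
    P ∈ matchings n' ↔ IsPartitionOf (total n') P ∧ (∀ b ∈ P, b.card = 2) ∧
      InhomBlocks n' P := by
  rw [matchings, Finset.mem_filter]
  constructor
  · tauto
  · intro h
    refine ⟨mem_pp.2 ?_, h⟩
    intro blk hblk
    exact (h.1.1 blk hblk).1

lemma mem_cmatchings {P : Finset (Finset ℕ)} :
    P ∈ cmatchings n c ↔ IsPartitionOf (total n + 1) P ∧ (∀ b ∈ P, b.card = 2) ∧
      ∀ b ∈ P, ∀ i ∈ b, ∀ k ∈ b, i ≠ k → ¬ sameBoxC n c i k := by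
  rw [cmatchings, Finset.mem_filter]
  constructor
  · tauto
  · intro h
    refine ⟨mem_pp.2 ?_, h⟩
    intro blk hblk
    exact (h.1.1 blk hblk).1

lemma inBox_plus_ne (hc1 : psum n j ≤ c) (hc2 : c ≤ psum n j + n j)
    {t : Fin m} (ht : t ≠ j) (z : ℕ) :
    inBox (Function.update n j (n j + 1)) t z ↔ (z ≠ c ∧ inBox n t (unshift c z)) := by
  have hval : Function.update n j (n j + 1) t = n t := Function.update_of_ne ht _ _
  rcases lt_or_gt_of_ne ht with h | h
  · have hps := psum_update_of_le (n := n) (j := j) (t := t) (n j + 1) (le_of_lt h)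
    have hord := psum_succ_le n h
    unfold inBox unshift
    rw [hps, hval]
    split_ifs <;> omega
  · have hps := psum_update_of_gt (n := n) (j := j) (t := t) (n j + 1) h
    have hord := psum_succ_le n h
    unfold inBox unshift
    rw [hval]
    split_ifs <;> omega

lemma inBox_plus_eq (hc1 : psum n j ≤ c) (hc2 : c ≤ psum n j + n j) (z : ℕ) :
    inBox (Function.update n j (n j + 1)) j z ↔ (psum n j ≤ z ∧ z ≤ psum n j + n j) := by
  have hps := psum_update_of_le (n := n) (j := j) (t := j) (n j + 1) (le_refl j)
  unfold inBox
  rw [hps, Function.update_self]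
  omega

lemma inBox_of_closed (hc1 : psum n j ≤ c) (hc2 : c ≤ psum n j + n j)
    {z : ℕ} (hz1 : psum n j ≤ z) (hz2 : z ≤ psum n j + n j) (hzc : z ≠ c) :
    inBox n j (unshift c z) := by
  unfold inBox unshift
  split_ifs <;> omega

lemma closed_of_inBox (hc1 : psum n j ≤ c) (hc2 : c ≤ psum n j + n j)
    {z : ℕ} (hzc : z ≠ c) (hz : inBox n j (unshift c z)) :
    psum n j ≤ z ∧ z ≤ psum n j + n j := by
  unfold inBox unshift at hz
  split_ifs at hz <;> omega

lemma sameBox_plus (hc1 : psum n j ≤ c) (hc2 : c ≤ psum n j + n j) (i k : ℕ) :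
    sameBox (Function.update n j (n j + 1)) i k ↔
      (sameBoxC n c i k ∨ ((psum n j ≤ i ∧ i ≤ psum n j + n j) ∧
        (psum n j ≤ k ∧ k ≤ psum n j + n j))) := by
  constructor
  · rintro ⟨t, hti, htk⟩
    by_cases ht : t = j
    · subst ht
      right
      exact ⟨(inBox_plus_eq hc1 hc2 i).1 hti, (inBox_plus_eq hc1 hc2 k).1 htk⟩
    · left
      obtain ⟨hic, hi⟩ := (inBox_plus_ne hc1 hc2 ht i).1 hti
      obtain ⟨hkc, hk⟩ := (inBox_plus_ne hc1 hc2 ht k).1 htk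
      exact ⟨hic, hkc, t, hi, hk⟩
  · rintro (⟨hic, hkc, t, hi, hk⟩ | ⟨hi, hk⟩)
    · by_cases ht : t = j
      · rw [ht] at hi hk
        refine ⟨j, ?_, ?_⟩
        · exact (inBox_plus_eq hc1 hc2 i).2 (closed_of_inBox hc1 hc2 hic hi)
        · exact (inBox_plus_eq hc1 hc2 k).2 (closed_of_inBox hc1 hc2 hkc hk)
      · exact ⟨t, (inBox_plus_ne hc1 hc2 ht i).2 ⟨hic, hi⟩,
          (inBox_plus_ne hc1 hc2 ht k).2 ⟨hkc, hk⟩⟩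
    · exact ⟨j, (inBox_plus_eq hc1 hc2 i).2 hi, (inBox_plus_eq hc1 hc2 k).2 hk⟩

lemma inBox_del {y0 : ℕ} (hy0 : inBox n j y0) (t : Fin m) {y : ℕ} (hy : y ≠ y0) :
    inBox (Function.update n j (n j - 1)) t (if y < y0 then y else y - 1) ↔ inBox n t y := by
  have hnj : 1 ≤ n j := by unfold inBox at hy0; omega
  rcases lt_trichotomy t j with h | h | h
  · have hps := psum_update_of_le (n := n) (j := j) (t := t) (n j - 1) (le_of_lt h)
    have hord := psum_succ_le n h
    have hval : Function.update n j (n j - 1) t = n t := Function.update_of_ne (ne_of_lt h) _ _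
    unfold inBox at hy0 ⊢
    rw [hps, hval]
    split_ifs <;> omega
  · subst h
    have hps := psum_update_of_le (n := n) (j := t) (t := t) (n t - 1) (le_refl t)
    unfold inBox at hy0 ⊢
    rw [hps, Function.update_self]
    split_ifs <;> omega
  · have hps := psum_update_of_gt (n := n) (j := j) (t := t) (n j - 1) h
    have hord := psum_succ_le n h
    have hval : Function.update n j (n j - 1) t = n t := Function.update_of_ne (ne_of_gt h) _ _
    unfold inBox at hy0 ⊢
    rw [hval]
    split_ifs <;> omega

lemma sameBox_del {y0 : ℕ} (hy0 : inBox n j y0) {y y' : ℕ} (hy : y ≠ y0) (hy' : y' ≠ y0) :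
    sameBox (Function.update n j (n j - 1)) (if y < y0 then y else y - 1)
      (if y' < y0 then y' else y' - 1) ↔ sameBox n y y' :=
  exists_congr fun t => and_congr (inBox_del hy0 t hy) (inBox_del hy0 t hy')

lemma unshift_inj {w v : ℕ} (hw : w ≠ c) (hv : v ≠ c) (h : unshift c w = unshift c v) :
    w = v := by
  unfold unshift at h
  split_ifs at h <;> omega

lemma dmap_comp {x : ℕ} (hxc : x ≠ c) {z : ℕ} (hzx : z ≠ x) (hzc : z ≠ c) :
    dmap (min x c) (max x c) z
      = (if unshift c z < unshift c x then unshift c z else unshift c z - 1) := by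
  simp only [dmap, unshift]
  split_ifs <;> omega

lemma pair_min_max (x : ℕ) : ({min x c, max x c} : Finset ℕ) = {x, c} := by
  rcases le_total x c with h | h
  · rw [min_eq_left h, max_eq_right h]
  · rw [min_eq_right h, max_eq_left h, Finset.pair_comm]

end L6

-- AUX L7
section L7
variable {m : ℕ} {n : Fin m → ℕ} {j : Fin m} {c : ℕ}

def caseJ {m : ℕ} (n : Fin m → ℕ) (j : Fin m) (c : ℕ) (P : Finset (Finset ℕ)) : Prop :=
  ∃ x, x ≠ c ∧ psum n j ≤ x ∧ x ≤ psum n j + n j ∧ ({x, c} : Finset ℕ) ∈ P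

lemma claim1 (hc1 : psum n j ≤ c) (hc2 : c ≤ psum n j + n j) :
    (cmatchings n c).filter (fun P => ¬ caseJ n j c P)
      = matchings (Function.update n j (n j + 1)) := by
  have htot : total (Function.update n j (n j + 1)) = total n + 1 := by
    have := total_update (n := n) (j := j) (n j + 1); omega
  ext P
  rw [Finset.mem_filter, mem_cmatchings, mem_matchings, htot]
  constructor
  · rintro ⟨⟨hpart, hcard, hinh⟩, hnc⟩
    refine ⟨hpart, hcard, ?_⟩
    intro blk hblk i hi k hk hik hsb
    rw [sameBox_plus hc1 hc2] at hsb
    rcases hsb with hsb | ⟨hi', hk'⟩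
    · exact hinh blk hblk i hi k hk hik hsb
    · by_cases hic : i = c
      · subst hic
        have hbe : blk = {k, i} := block_eq_pair hcard hblk hk hi (Ne.symm hik)
        exact hnc ⟨k, Ne.symm hik, hk'.1, hk'.2, hbe ▸ hblk⟩
      · by_cases hkc : k = c
        · subst hkc
          have hbe : blk = {i, k} := block_eq_pair hcard hblk hi hk hik
          exact hnc ⟨i, hic, hi'.1, hi'.2, hbe ▸ hblk⟩
        · exact hinh blk hblk i hi k hk hik
            ⟨hic, hkc, j, inBox_of_closed hc1 hc2 hi'.1 hi'.2 hic,
              inBox_of_closed hc1 hc2 hk'.1 hk'.2 hkc⟩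
  · rintro ⟨hpart, hcard, hinh⟩
    refine ⟨⟨hpart, hcard, ?_⟩, ?_⟩
    · intro blk hblk i hi k hk hik hsb
      exact hinh blk hblk i hi k hk hik ((sameBox_plus hc1 hc2 i k).2 (Or.inl hsb))
    · rintro ⟨x, hxc, hx1, hx2, hxm⟩
      exact hinh _ hxm x (by simp) c (by simp) hxc
        ((sameBox_plus hc1 hc2 x c).2 (Or.inr ⟨⟨hx1, hx2⟩, hc1, hc2⟩))

lemma claim2x (q : ℝ) (hc1 : psum n j ≤ c) (hc2 : c ≤ psum n j + n j)
    {x : ℕ} (hx1 : psum n j ≤ x) (hx2 : x ≤ psum n j + n j) (hxc : x ≠ c) :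
    ∑ P ∈ (cmatchings n c).filter (fun P => ({x, c} : Finset ℕ) ∈ P),
        q ^ crossNum (total n + 1) P
      = q ^ (max x c - min x c - 1) * Kq (Function.update n j (n j - 1)) q := by
  have hnj : 1 ≤ n j := by omega
  have htot : total (Function.update n j (n j - 1)) + 1 = total n := by
    have := total_update (n := n) (j := j) (n j - 1); omega
  set N' := total (Function.update n j (n j - 1)) with hN'
  have htot2 : total n + 1 = N' + 2 := by omega
  set a := min x c with ha
  set b := max x c with hb
  have hab : a < b := by omega
  have hbN : b < N' + 2 := by
    have := psum_add_le_total n j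
    omega
  have hxab : x = a ∨ x = b := by omega
  have hcab : c = a ∨ c = b := by omega
  have hpmm : ({a, b} : Finset ℕ) = ({x, c} : Finset ℕ) := by rw [ha, hb]; exact pair_min_max x
  have hy0 : inBox n j (unshift c x) := inBox_of_closed hc1 hc2 hx1 hx2 hxc
  have hdc : ∀ z, z ≠ x → z ≠ c → dmap a b z
      = (if unshift c z < unshift c x then unshift c z else unshift c z - 1) := by
    intro z h1 h2; rw [ha, hb]; exact dmap_comp hxc h1 h2
  have hfacts : ∀ P ∈ (cmatchings n c).filter (fun P => ({x, c} : Finset ℕ) ∈ P),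
      IsPartitionOf (N' + 2) P ∧ (∀ blk ∈ P, blk.card = 2) ∧
      (∀ blk ∈ P, ∀ i ∈ blk, ∀ k ∈ blk, i ≠ k → ¬ sameBoxC n c i k) ∧
      ({a, b} : Finset ℕ) ∈ P ∧
      (∀ z u, ({z, u} : Finset ℕ) ∈ P → a < z → z < b → u < a ∨ b < u) := by
    intro P hP
    obtain ⟨hPc, hxcP⟩ := Finset.mem_filter.1 hP
    obtain ⟨hpart0, hcards, hinh⟩ := mem_cmatchings.1 hPc
    rw [htot2] at hpart0
    have hmab : ({a, b} : Finset ℕ) ∈ P := by rw [hpmm]; exact hxcP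
    refine ⟨hpart0, hcards, hinh, hmab, ?_⟩
    intro z u hzu haz hzb
    have hzx : z ≠ x := by omega
    have hzc : z ≠ c := by omega
    have hzbox : inBox n j (unshift c z) := by
      unfold inBox unshift; split_ifs <;> omega
    have hune : ({z, u} : Finset ℕ) ≠ ({a, b} : Finset ℕ) := by
      intro he
      have : z ∈ ({a, b} : Finset ℕ) := he ▸ (by simp)
      simp only [Finset.mem_insert, Finset.mem_singleton] at this
      omega
    have hnm := not_mem_block hpart0 hmab hzu hune
    have hua : u ≠ a := by rintro rfl; exact hnm.1 (by simp)
    have hub : u ≠ b := by rintro rfl; exact hnm.2 (by simp)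
    have hzune : z ≠ u := by
      rintro rfl
      have := hcards _ hzu
      simp at this
    by_contra hcon
    push_neg at hcon
    have hau : a < u ∧ u < b := by omega
    have huc : u ≠ c := by omega
    have hux : u ≠ x := by omega
    have hubox : inBox n j (unshift c u) := by
      unfold inBox unshift; split_ifs <;> omega
    exact hinh _ hzu z (by simp) u (by simp) hzune ⟨hzc, huc, j, hzbox, hubox⟩
  rw [Kq, Finset.mul_sum]
  apply Finset.sum_bij' (i := fun P _ => cmpr a b P) (j := fun P' _ => xpnd a b P')
  · intro P hP
    obtain ⟨hpart0, hcards, hinh, hmab, hspan⟩ := hfacts P hP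
    rw [mem_matchings]
    refine ⟨cmpr_isPartition hpart0 hab hbN hmab, cmpr_card hpart0 hcards hab hmab, ?_⟩
    intro blk' hblk' i' hi' k' hk' hik' hsb
    obtain ⟨blk, hblkE, rfl⟩ := Finset.mem_image.1 hblk'
    have hblkP := (Finset.mem_erase.1 hblkE).2
    have hblkne := (Finset.mem_erase.1 hblkE).1
    have hnm := not_mem_block hpart0 hmab hblkP hblkne
    obtain ⟨z1, hz1, rfl⟩ := Finset.mem_image.1 hi'
    obtain ⟨z2, hz2, rfl⟩ := Finset.mem_image.1 hk'
    have hz1a : z1 ≠ a := by rintro rfl; exact hnm.1 hz1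
    have hz1b : z1 ≠ b := by rintro rfl; exact hnm.2 hz1
    have hz2a : z2 ≠ a := by rintro rfl; exact hnm.1 hz2
    have hz2b : z2 ≠ b := by rintro rfl; exact hnm.2 hz2
    have hz1x : z1 ≠ x := by omega
    have hz1c : z1 ≠ c := by omega
    have hz2x : z2 ≠ x := by omega
    have hz2c : z2 ≠ c := by omega
    have hz12 : z1 ≠ z2 := by rintro rfl; exact hik' rfl
    apply hinh blk hblkP z1 hz1 z2 hz2 hz12
    refine ⟨hz1c, hz2c, ?_⟩
    rw [hdc z1 hz1x hz1c, hdc z2 hz2x hz2c] at hsb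
    have hne1 : unshift c z1 ≠ unshift c x := fun he => hz1x (unshift_inj hz1c hxc he)
    have hne2 : unshift c z2 ≠ unshift c x := fun he => hz2x (unshift_inj hz2c hxc he)
    exact (sameBox_del hy0 hne1 hne2).1 hsb
  · intro P' hP'
    obtain ⟨hpart', hcards', hinh'⟩ := mem_matchings.1 hP'
    rw [Finset.mem_filter]
    constructor
    · rw [mem_cmatchings]
      refine ⟨by rw [htot2]; exact xpnd_isPartition hpart' hab hbN,
        xpnd_card hcards' hab, ?_⟩
      intro blk hblk i hi k hk hik hsbC
      obtain ⟨hic, hkc, hsb⟩ := hsbC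
      rcases Finset.mem_insert.1 hblk with rfl | hblk
      · simp only [Finset.mem_insert, Finset.mem_singleton] at hi hk
        omega
      · obtain ⟨blk', hblk', rfl⟩ := Finset.mem_image.1 hblk
        obtain ⟨z1, hz1, rfl⟩ := Finset.mem_image.1 hi
        obtain ⟨z2, hz2, rfl⟩ := Finset.mem_image.1 hk
        have hz12 : z1 ≠ z2 := by rintro rfl; exact hik rfl
        apply hinh' blk' hblk' z1 hz1 z2 hz2 hz12
        have h1a := (umap_ne hab z1).1
        have h1b := (umap_ne hab z1).2
        have h2a := (umap_ne hab z2).1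
        have h2b := (umap_ne hab z2).2
        have h1x : umap a b z1 ≠ x := by omega
        have h1c : umap a b z1 ≠ c := by omega
        have h2x : umap a b z2 ≠ x := by omega
        have h2c : umap a b z2 ≠ c := by omega
        have e1 : dmap a b (umap a b z1) = z1 := dmap_umap hab z1
        have e2 : dmap a b (umap a b z2) = z2 := dmap_umap hab z2
        rw [hdc _ h1x h1c] at e1
        rw [hdc _ h2x h2c] at e2
        have hne1 : unshift c (umap a b z1) ≠ unshift c x :=
          fun he => h1x (unshift_inj h1c hxc he)
        have hne2 : unshift c (umap a b z2) ≠ unshift c x :=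
          fun he => h2x (unshift_inj h2c hxc he)
        have hres := (sameBox_del hy0 hne1 hne2).2 hsb
        rw [e1, e2] at hres
        exact hres
    · rw [← hpmm]
      exact Finset.mem_insert_self _ _
  · intro P hP
    obtain ⟨hpart0, _, _, hmab, _⟩ := hfacts P hP
    exact xpnd_cmpr hpart0 hab hmab
  · intro P' _
    exact cmpr_xpnd hab P'
  · intro P hP
    obtain ⟨hpart0, hcards, _, hmab, hspan⟩ := hfacts P hP
    have hcr := crossNum_erase hpart0 hcards hab hbN hmab hspan
    rw [htot2, hcr, pow_add, mul_comm]

end L7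

-- AUX L8
section L8
variable {m : ℕ} {n : Fin m → ℕ} {j : Fin m} {c : ℕ}

lemma decomp (q : ℝ) (hc1 : psum n j ≤ c) (hc2 : c ≤ psum n j + n j) :
    KqC n c q = Kq (Function.update n j (n j + 1)) q
      + (∑ x ∈ (Finset.Icc (psum n j) (psum n j + n j)).erase c,
          q ^ (max x c - min x c - 1)) * Kq (Function.update n j (n j - 1)) q := by
  have hsplit := Finset.sum_filter_add_sum_filter_not (cmatchings n c)
    (fun P => caseJ n j c P) (fun P => q ^ crossNum (total n + 1) P)
  have h1 : ∑ P ∈ (cmatchings n c).filter (fun P => ¬ caseJ n j c P),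
      q ^ crossNum (total n + 1) P = Kq (Function.update n j (n j + 1)) q := by
    have htot : total (Function.update n j (n j + 1)) = total n + 1 := by
      have := total_update (n := n) (j := j) (n j + 1); omega
    rw [claim1 hc1 hc2, Kq, htot]
  have h2 : ∑ P ∈ (cmatchings n c).filter (fun P => caseJ n j c P),
      q ^ crossNum (total n + 1) P
      = (∑ x ∈ (Finset.Icc (psum n j) (psum n j + n j)).erase c,
          q ^ (max x c - min x c - 1)) * Kq (Function.update n j (n j - 1)) q := by
    have hset : (cmatchings n c).filter (fun P => caseJ n j c P)
        = ((Finset.Icc (psum n j) (psum n j + n j)).erase c).biUnion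
          (fun x => (cmatchings n c).filter (fun P => ({x, c} : Finset ℕ) ∈ P)) := by
      ext P
      simp only [Finset.mem_filter, Finset.mem_biUnion, Finset.mem_erase, Finset.mem_Icc]
      constructor
      · rintro ⟨hPc, x, hx1, hx2, hx3, hx4⟩
        exact ⟨x, ⟨hx1, hx2, hx3⟩, hPc, hx4⟩
      · rintro ⟨x, ⟨hx1, hx2, hx3⟩, hPc, hx4⟩
        exact ⟨hPc, x, hx1, hx2, hx3, hx4⟩
    have hdisj : ((((Finset.Icc (psum n j) (psum n j + n j)).erase c) : Finset ℕ) : Set ℕ).PairwiseDisjoint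
        (fun x => (cmatchings n c).filter (fun P => ({x, c} : Finset ℕ) ∈ P)) := by
      intro x1 hx1 x2 hx2 hne
      rw [Function.onFun, Finset.disjoint_left]
      intro P hP1 hP2
      obtain ⟨hPc, hm1⟩ := Finset.mem_filter.1 hP1
      obtain ⟨_, hm2⟩ := Finset.mem_filter.1 hP2
      obtain ⟨hpart, _, _⟩ := mem_cmatchings.1 hPc
      rw [Finset.pair_comm] at hm1 hm2
      exact hne (pair_unique hpart hm1 hm2)
    rw [hset, Finset.sum_biUnion hdisj, Finset.sum_mul]
    apply Finset.sum_congr rfl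
    intro x hx
    obtain ⟨hxc, hx'⟩ := Finset.mem_erase.1 hx
    obtain ⟨hx1, hx2⟩ := Finset.mem_Icc.1 hx'
    exact claim2x q hc1 hc2 hx1 hx2 hxc
  rw [KqC, ← hsplit, h1, h2, add_comm]

lemma weight_sum_hi (q : ℝ) :
    ∑ x ∈ (Finset.Icc (psum n j) (psum n j + n j)).erase (psum n j + n j),
      q ^ (max x (psum n j + n j) - min x (psum n j + n j) - 1) = qInt q (n j) := by
  have himg : (Finset.Icc (psum n j) (psum n j + n j)).erase (psum n j + n j)
      = (Finset.range (n j)).image (fun t => psum n j + t) := by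
    ext z
    simp only [Finset.mem_erase, Finset.mem_Icc, Finset.mem_image, Finset.mem_range]
    constructor
    · rintro ⟨h1, h2, h3⟩
      exact ⟨z - psum n j, by omega, by omega⟩
    · rintro ⟨t, ht, rfl⟩
      omega
  rw [himg, Finset.sum_image (by intro x _ y _ h; simp only at h; omega)]
  have hcg : ∀ t ∈ Finset.range (n j),
      q ^ (max (psum n j + t) (psum n j + n j) - min (psum n j + t) (psum n j + n j) - 1)
        = q ^ (n j - 1 - t) := by
    intro t ht
    rw [Finset.mem_range] at ht
    congr 1
    omega
  rw [Finset.sum_congr rfl hcg, qInt]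
  exact Finset.sum_range_reflect (fun t => q ^ t) (n j)

lemma weight_sum_lo (q : ℝ) :
    ∑ x ∈ (Finset.Icc (psum n j) (psum n j + n j)).erase (psum n j),
      q ^ (max x (psum n j) - min x (psum n j) - 1) = qInt q (n j) := by
  have himg : (Finset.Icc (psum n j) (psum n j + n j)).erase (psum n j)
      = (Finset.range (n j)).image (fun t => psum n j + 1 + t) := by
    ext z
    simp only [Finset.mem_erase, Finset.mem_Icc, Finset.mem_image, Finset.mem_range]
    constructor
    · rintro ⟨h1, h2, h3⟩
      exact ⟨z - psum n j - 1, by omega, by omega⟩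
    · rintro ⟨t, ht, rfl⟩
      omega
  rw [himg, Finset.sum_image (by intro x _ y _ h; simp only at h; omega)]
  rw [qInt]
  apply Finset.sum_congr rfl
  intro t ht
  rw [Finset.mem_range] at ht
  congr 1
  omega

lemma insertion (q : ℝ) (hc : c = psum n j ∨ c = psum n j + n j) :
    KqC n c q = Kq (Function.update n j (n j + 1)) q
      + qInt q (n j) * Kq (Function.update n j (n j - 1)) q := by
  rcases hc with rfl | rfl
  · rw [decomp q (le_refl _) (by omega), weight_sum_lo]
  · rw [decomp q (by omega) (le_refl _), weight_sum_hi]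

lemma Fstep (q : ℝ) {k : Fin m} (hk : (k : ℕ) = (j : ℕ) + 1) :
    Kq (Function.update n j (n j + 1)) q + qInt q (n j) * Kq (Function.update n j (n j - 1)) q
      = Kq (Function.update n k (n k + 1)) q
        + qInt q (n k) * Kq (Function.update n k (n k - 1)) q := by
  rw [← insertion (c := psum n j + n j) q (Or.inr rfl),
    ← insertion (c := psum n k) (j := k) q (Or.inl rfl), psum_next hk]

lemma Fconst (q : ℝ) (j k : Fin m) :
    Kq (Function.update n j (n j + 1)) q + qInt q (n j) * Kq (Function.update n j (n j - 1)) q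
      = Kq (Function.update n k (n k + 1)) q
        + qInt q (n k) * Kq (Function.update n k (n k - 1)) q := by
  suffices H : ∀ d : ℕ, ∀ j' k' : Fin m, (k' : ℕ) = (j' : ℕ) + d →
      Kq (Function.update n j' (n j' + 1)) q
          + qInt q (n j') * Kq (Function.update n j' (n j' - 1)) q
        = Kq (Function.update n k' (n k' + 1)) q
          + qInt q (n k') * Kq (Function.update n k' (n k' - 1)) q by
    rcases le_total (j : ℕ) (k : ℕ) with h | h
    · exact H ((k : ℕ) - (j : ℕ)) j k (by omega)
    · exact (H ((j : ℕ) - (k : ℕ)) k j (by omega)).symm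
  intro d
  induction d with
  | zero =>
    intro j' k' h
    have : j' = k' := Fin.ext (by omega)
    rw [this]
  | succ d ih =>
    intro j' k' h
    have hmid : ((j' : ℕ) + d) < m := by have := k'.isLt; omega
    have h1 := ih j' ⟨(j' : ℕ) + d, hmid⟩ rfl
    have h2 := Fstep (n := n) (j := (⟨(j' : ℕ) + d, hmid⟩ : Fin m)) q (k := k') (by simp; omega)
    rw [h1, h2]

end L8

/-- the difference system satisfied by the crossing-enumerating
polynomials of inhomogeneous perfect matchings. -/
theorem q_hermite_difference_system {m : ℕ} (n : Fin m → ℕ) (j k : Fin m)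
    (hjk : j ≠ k) (q : ℝ) :
    Kq (Function.update n j (n j + 1)) q - Kq (Function.update n k (n k + 1)) q
      = qInt q (n k) * Kq (Function.update n k (n k - 1)) q
        - qInt q (n j) * Kq (Function.update n j (n j - 1)) q := by
  have := Fconst (n := n) q j k
  linarith

end Paper
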